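/- arXiv:1901.03492 — 2 statements merged into one kernel-verified Lean document; each statement's English description precedes it below -/
import Mathlib

section
/- Let N be a normal subgroup of a finite group G, let θ be an irreducible complex character of N, let T = I_G(θ) be the inertia (stabilizer) subgroup of θ in G, and let χ be an irreducible character of G lying over θ (i.e., θ is a constituent of the restriction of χ to N). Then θ(1) divides χ(1) and the index |G : T| divides the quotient χ(1)/θ(1). -/
open scoped BigOperators

open Module LinearMap CategoryTheory

lemma char_inv_aux {H : Type} [Group H] [Fintype H] (V : FDRep ℂ H) (h : H) :
    V.character h⁻¹ = (starRingEnd ℂ) (V.character h) := by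
  classical
  set f : Module.End ℂ V := V.ρ h with hf
  set g : Module.End ℂ V := V.ρ h⁻¹ with hg
  set k := Fintype.card H with hk
  have hk0 : 0 < k := Fintype.card_pos
  have hfk : f ^ k = 1 := by
    rw [hf, ← map_pow, pow_card_eq_one, map_one]
  have hgf : g * f = 1 := by
    rw [hf, hg, ← map_mul, inv_mul_cancel, map_one]
  -- semisimplicity
  have hsq : Squarefree ((Polynomial.X : Polynomial ℂ) ^ k - Polynomial.C 1) :=
    (Polynomial.separable_X_pow_sub_C (1:ℂ) (Nat.cast_ne_zero.mpr hk0.ne') one_ne_zero).squarefree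
  have haev : Polynomial.aeval f ((Polynomial.X : Polynomial ℂ) ^ k - Polynomial.C 1) = 0 := by
    simp [hfk]
  have hss : f.IsSemisimple := Module.End.isSemisimple_of_squarefree_aeval_eq_zero hsq haev
  have htop : ⨆ μ : ℂ, f.eigenspace μ = ⊤ := by
    have h1 := Module.End.iSup_maxGenEigenspace_eq_top f
    have h2 : ∀ μ : ℂ, f.maxGenEigenspace μ = f.eigenspace μ :=
      hss.isFinitelySemisimple.maxGenEigenspace_eq_eigenspace
    simp_rw [h2] at h1
    exact h1
  have hinternal : DirectSum.IsInternal f.eigenspace :=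
    DirectSum.isInternal_submodule_of_iSupIndep_of_iSup_eq_top f.eigenspaces_iSupIndep htop
  have hfin : {μ : ℂ | f.eigenspace μ ≠ ⊥}.Finite := by
    apply Set.Finite.subset (minpoly ℂ f).roots.toFinset.finite_toSet
    intro μ hμ
    have hev : f.HasEigenvalue μ := hμ
    rw [Module.End.hasEigenvalue_iff_isRoot] at hev
    simp only [Multiset.mem_toFinset, Finset.coe_sort_coe, Multiset.mem_coe, Finset.mem_coe]
    rw [Polynomial.mem_roots (minpoly.ne_zero (Algebra.IsIntegral.isIntegral f))]
    exact hev
  have hmapsf : ∀ μ : ℂ, Set.MapsTo f (f.eigenspace μ) (f.eigenspace μ) := by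
    intro μ x hx
    rw [SetLike.mem_coe, Module.End.mem_eigenspace_iff] at hx ⊢
    rw [hx, map_smul, hx]
  have hfg : f * g = 1 := by
    rw [hf, hg, ← map_mul, mul_inv_cancel, map_one]
  have hmapsg : ∀ μ : ℂ, Set.MapsTo g (f.eigenspace μ) (f.eigenspace μ) := by
    intro μ x hx
    rw [SetLike.mem_coe, Module.End.mem_eigenspace_iff] at hx
    rw [SetLike.mem_coe, Module.End.mem_eigenspace_iff]
    have hx' : μ • g x = x := by
      calc μ • g x = g (f x) := by rw [hx, map_smul]
      _ = x := by rw [← Module.End.mul_apply, hgf, Module.End.one_apply]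
    have h1 : f (g x) = x := by
      rw [← Module.End.mul_apply, hfg, Module.End.one_apply]
    rw [h1]; exact hx'.symm
  have hμk : ∀ μ ∈ hfin.toFinset, μ ^ k = 1 := by
    intro μ hμ
    rw [Set.Finite.mem_toFinset] at hμ
    have hev : f.HasEigenvalue μ := hμ
    obtain ⟨v, hv⟩ := hev.exists_hasEigenvector
    have hpow : ∀ m : ℕ, (f ^ m) v = μ ^ m • v := by
      intro m
      induction m with
      | zero => simp
      | succ m ih =>
          calc (f ^ (m+1)) v = (f ^ m) (f v) := by rw [pow_succ, Module.End.mul_apply]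
          _ = (f ^ m) (μ • v) := by rw [hv.apply_eq_smul]
          _ = μ • (f ^ m) v := by rw [map_smul]
          _ = μ • μ ^ m • v := by rw [ih]
          _ = μ ^ (m+1) • v := by rw [smul_smul, ← pow_succ']
    have h1 : μ ^ k • v = v := by rw [← hpow, hfk, Module.End.one_apply]
    have h2 : (μ ^ k - 1) • v = 0 := by rw [sub_smul, one_smul, h1, sub_self]
    rcases smul_eq_zero.mp h2 with h3 | h3
    · exact sub_eq_zero.mp h3
    · exact absurd h3 hv.right
  have hμ0 : ∀ μ ∈ hfin.toFinset, μ ≠ 0 := by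
    intro μ hμ h0
    have := hμk μ hμ
    rw [h0, zero_pow hk0.ne'] at this
    exact zero_ne_one this
  have htrf : trace ℂ V f = ∑ μ ∈ hfin.toFinset, (μ * (finrank ℂ (f.eigenspace μ) : ℂ)) := by
    rw [trace_eq_sum_trace_restrict' hinternal hfin hmapsf]
    refine Finset.sum_congr rfl fun μ _ => ?_
    have hr : f.restrict (hmapsf μ) = (μ : ℂ) • (LinearMap.id : f.eigenspace μ →ₗ[ℂ] f.eigenspace μ) := by
      ext x
      have hx := x.2
      rw [Module.End.mem_eigenspace_iff] at hx
      exact hx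
    rw [hr, map_smul, trace_id, smul_eq_mul]
  have htrg : trace ℂ V g = ∑ μ ∈ hfin.toFinset, (μ⁻¹ * (finrank ℂ (f.eigenspace μ) : ℂ)) := by
    rw [trace_eq_sum_trace_restrict' hinternal hfin hmapsg]
    refine Finset.sum_congr rfl fun μ hμ => ?_
    have hr : g.restrict (hmapsg μ) = (μ⁻¹ : ℂ) • (LinearMap.id : f.eigenspace μ →ₗ[ℂ] f.eigenspace μ) := by
      ext x
      have hx := x.2
      rw [Module.End.mem_eigenspace_iff] at hx
      have hgx : μ • g (x : V) = (x : V) := by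
        calc μ • g (x : V) = g (f (x : V)) := by rw [hx, map_smul]
        _ = (x : V) := by rw [← Module.End.mul_apply, hgf, Module.End.one_apply]
      have : g (x : V) = μ⁻¹ • (x : V) := by
        have h2 : μ⁻¹ • (μ • g (x : V)) = μ⁻¹ • (x : V) := by rw [hgx]
        rw [smul_smul, inv_mul_cancel₀ (hμ0 μ hμ), one_smul] at h2
        exact h2
      exact this
    rw [hr, map_smul, trace_id, smul_eq_mul]
  have hcf : V.character h = trace ℂ V f := rfl
  have hcg : V.character h⁻¹ = trace ℂ V g := rfl
  rw [hcf, hcg, htrf, htrg, map_sum]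
  refine Finset.sum_congr rfl fun μ hμ => ?_
  have hn1 : ‖μ‖ = 1 := by
    have hnk : ‖μ‖ ^ k = 1 := by rw [← norm_pow, hμk μ hμ, norm_one]
    rcases (pow_eq_one_iff_cases).mp hnk with h | h | h
    · exact absurd h hk0.ne'
    · exact h
    · exfalso; nlinarith [norm_nonneg μ, h.1]
  rw [map_mul]
  congr 1
  · exact Complex.inv_eq_conj hn1
  · simp

lemma sum_char_mul_char_eq_finrank_hom {H : Type} [Group H] [Fintype H] (V W : FDRep ℂ H) :
    ∑ g : H, V.character g * W.character g⁻¹ =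
      (Fintype.card H : ℂ) * (finrank ℂ (W ⟶ V) : ℂ) := by
  have hcard : (Fintype.card H : ℂ) ≠ 0 := Nat.cast_ne_zero.mpr Fintype.card_pos.ne'
  have : Invertible (Fintype.card H : ℂ) := invertibleOfNonzero hcard
  have key : ⅟ (Fintype.card H : ℂ) • ∑ g : H, V.character g * W.character g⁻¹ =
      (finrank ℂ (W ⟶ V) : ℂ) := by
    conv_lhs =>
      enter [2, 2, g]
      rw [mul_comm, ← FDRep.char_dual, ← Pi.mul_apply, ← FDRep.char_tensor]
      rw [FDRep.char_iso (FDRep.dualTensorIsoLinHom W.ρ V)]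
    have : Invertible (Nat.card H : ℂ) := by rwa [Nat.card_eq_fintype_card]
    rw [invOf_eq_inv, smul_eq_mul, ← Nat.card_eq_fintype_card, FDRep.average_char_eq_finrank_invariants]
    rw [FDRep.of_ρ']
    rw [(Representation.linHom.invariantsEquivFDRepHom W V).finrank_eq]
  calc ∑ g : H, V.character g * W.character g⁻¹
      = (Fintype.card H : ℂ) * (⅟ (Fintype.card H : ℂ) • ∑ g : H, V.character g * W.character g⁻¹) := by
        rw [smul_eq_mul, ← mul_assoc, mul_invOf_self, one_mul]
    _ = (Fintype.card H : ℂ) * (finrank ℂ (W ⟶ V) : ℂ) := by rw [key]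

lemma nontrivial_of_simple {H : Type} [Group H] (V : FDRep ℂ H) [Simple V] :
    Nontrivial V := by
  by_contra hcon
  rw [not_nontrivial_iff_subsingleton] at hcon
  apply id_nonzero V
  apply Action.Hom.ext
  exact FGModuleCat.hom_ext (LinearMap.ext fun x => @Subsingleton.elim _ hcon _ _)

section Aux
variable {H : Type} [Group H]

/-- The subrepresentation on an invariant subspace. -/
noncomputable def subRep (V : FDRep ℂ H) (U : Submodule ℂ V)
    (hU : ∀ h : H, ∀ u ∈ U, V.ρ h u ∈ U) : FDRep ℂ H :=
  FDRep.of
  { toFun := fun h => (V.ρ h).restrict (fun x hx => hU h x hx)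
    map_one' := by ext x; simp [LinearMap.restrict_coe_apply]
    map_mul' := fun g h => by ext x; simp [LinearMap.restrict_coe_apply] }

lemma invariant_subspace_bot_or_top (V : FDRep ℂ H) [Simple V]
    (U : Submodule ℂ V) (hU : ∀ h : H, ∀ u ∈ U, V.ρ h u ∈ U) : U = ⊥ ∨ U = ⊤ := by
  rcases eq_or_ne U ⊥ with hbot | hne
  · exact Or.inl hbot
  right
  let Urep := subRep V U hU
  let ι : Urep ⟶ V := ⟨FGModuleCat.ofHom U.subtype, fun h => by
    ext x
    rfl⟩
  have hι0 : ι ≠ 0 := by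
    obtain ⟨x, hx, hx0⟩ := Submodule.ne_bot_iff U |>.mp hne
    intro h0
    have : ι.hom ⟨x, hx⟩ = 0 := by rw [h0]; rfl
    exact hx0 this
  have hmono : Mono ι := by
    constructor
    intro Z a b hab
    apply Action.Hom.ext
    ext z
    have h1 := congrArg (fun (m : Z ⟶ V) => m.hom z) hab
    simp only [Action.comp_hom] at h1
    have h2 : (ι.hom (a.hom z) : V) = ι.hom (b.hom z) := h1
    exact Subtype.ext h2
  have hiso : IsIso ι := isIso_of_mono_of_nonzero hι0
  have hiso2 : IsIso ι.hom := by
    have : IsIso (asIso ι).hom.hom := by infer_instance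
    simpa using this
  rw [eq_top_iff]
  intro v _
  have h3 := congrArg (fun (m : V.V ⟶ V.V) => m v) (IsIso.inv_hom_id ι.hom)
  have h4 : ι.hom ((inv ι.hom) v) = v := h3
  rw [← h4]
  exact ((inv ι.hom) v).2

lemma commutant_smul_id (V : FDRep ℂ H) [Simple V]
    (f : V →ₗ[ℂ] V) (hf : ∀ h : H, f ∘ₗ (V.ρ h) = (V.ρ h) ∘ₗ f) :
    ∃ c : ℂ, f = c • LinearMap.id := by
  let F : V ⟶ V := ⟨FGModuleCat.ofHom f, fun h => by ext x; exact LinearMap.congr_fun (hf h) x⟩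
  obtain ⟨c, hc⟩ := endomorphism_simple_eq_smul_id ℂ F
  refine ⟨c, ?_⟩
  have := congrArg Action.Hom.hom hc
  simp only [Action.smul_hom, Action.id_hom] at this
  ext x
  exact (congrArg (fun (m : V.V ⟶ V.V) => m.hom.hom x) this).symm

end Aux

lemma twisted_commute {H : Type} [Group H] [Fintype H] (θ : FDRep ℂ H) (π : H ≃* H)
    (m : H) :
    (∑ a : H, θ.character a⁻¹ • θ.ρ (π a)) * θ.ρ (π m) =
      θ.ρ (π m) * (∑ a : H, θ.character a⁻¹ • θ.ρ (π a)) := by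
  rw [Finset.sum_mul, Finset.mul_sum]
  refine Fintype.sum_equiv (MulAut.conj m⁻¹).toEquiv _ _ (fun a => ?_)
  have h1 : (MulAut.conj m⁻¹).toEquiv a = m⁻¹ * a * m := by
    simp [MulAut.conj_apply]
  have h2 : θ.character (m⁻¹ * a * m)⁻¹ = θ.character a⁻¹ := by
    have h3 : (m⁻¹ * a * m)⁻¹ = m⁻¹ * a⁻¹ * (m⁻¹)⁻¹ := by group
    rw [h3, FDRep.char_conj]
  rw [h1, smul_mul_assoc, mul_smul_comm, h2]
  congr 1
  rw [← map_mul θ.ρ, ← map_mul π, ← map_mul θ.ρ, ← map_mul π]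
  congr 2
  group

lemma twisted_proj {H : Type} [Group H] [Fintype H] (θ : FDRep ℂ H) [Simple θ] (π : H ≃* H) :
    ((finrank ℂ θ : ℂ) / (Fintype.card H : ℂ)) • ∑ a : H, θ.character a⁻¹ • θ.ρ (π a)
      = ((finrank ℂ (θ ⟶ FDRep.of (θ.ρ.comp π.toMonoidHom)) : ℕ) : ℂ) •
          (1 : Module.End ℂ θ) := by
  classical
  set τ : FDRep ℂ H := FDRep.of (θ.ρ.comp π.toMonoidHom) with hτ
  have hτρ : ∀ a : H, τ.ρ a = θ.ρ (π a) := fun a => rfl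
  have hτchar : ∀ a : H, τ.character a = θ.character (π a) := fun a => rfl
  have hnt : Nontrivial θ := nontrivial_of_simple θ
  have hd0 : (finrank ℂ θ : ℂ) ≠ 0 := Nat.cast_ne_zero.mpr (finrank_pos).ne'
  have hcard0 : (Fintype.card H : ℂ) ≠ 0 := Nat.cast_ne_zero.mpr Fintype.card_pos.ne'
  set F : Module.End ℂ θ :=
    ((finrank ℂ θ : ℂ) / (Fintype.card H : ℂ)) • ∑ a : H, θ.character a⁻¹ • θ.ρ (π a) with hF
  have hcomm : ∀ m : H, F ∘ₗ (θ.ρ m) = (θ.ρ m) ∘ₗ F := by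
    intro m
    have h1 := twisted_commute θ π (π.symm m)
    rw [π.apply_symm_apply] at h1
    show F * θ.ρ m = θ.ρ m * F
    rw [hF, smul_mul_assoc, mul_smul_comm, h1]
  obtain ⟨c, hc⟩ := commutant_smul_id θ F hcomm
  have htrF : trace ℂ θ F = (finrank ℂ θ : ℂ) *
      ((finrank ℂ (θ ⟶ τ) : ℕ) : ℂ) := by
    rw [hF, map_smul, map_sum]
    have : ∀ a : H, trace ℂ θ (θ.character a⁻¹ • θ.ρ (π a)) =
        τ.character a * θ.character a⁻¹ := by
      intro a
      rw [map_smul, smul_eq_mul, mul_comm]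
      rfl
    rw [Finset.sum_congr rfl (fun a _ => this a)]
    rw [sum_char_mul_char_eq_finrank_hom τ θ]
    rw [smul_eq_mul, div_mul_eq_mul_div, mul_div_assoc, mul_div_cancel_left₀ _ hcard0]
  have htrc : trace ℂ θ F = c * (finrank ℂ θ : ℂ) := by
    rw [hc, map_smul, trace_id, smul_eq_mul]
  have hceq : c = ((finrank ℂ (θ ⟶ τ) : ℕ) : ℂ) :=
    (mul_left_cancel₀ hd0 (by linear_combination htrF.symm.trans htrc)).symm
  rw [hc, hceq]
  rfl


lemma char_eq_of_hom_twisted_ne_zero {H : Type} [Group H] (θ : FDRep ℂ H) [Simple θ]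
    (π : H ≃* H)
    (hne : finrank ℂ (θ ⟶ FDRep.of (θ.ρ.comp π.toMonoidHom)) ≠ 0) (n : H) :
    θ.character (π n) = θ.character n := by
  classical
  set τ : FDRep ℂ H := FDRep.of (θ.ρ.comp π.toMonoidHom) with hτ
  obtain ⟨F, hF0⟩ : ∃ F : θ ⟶ τ, F ≠ 0 := by
    by_contra hcon
    push_neg at hcon
    have : Subsingleton (θ ⟶ τ) := ⟨fun a b => (hcon a).trans (hcon b).symm⟩
    exact hne (finrank_zero_of_subsingleton)
  let f : θ →ₗ[ℂ] θ := F.hom.hom.hom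
  have hcomm : ∀ m : H, f ∘ₗ (θ.ρ m) = (θ.ρ (π m)) ∘ₗ f := fun m => congrArg (fun φ => φ.hom.hom) (F.comm m)
  have hUinv : ∀ m : H, ∀ u ∈ LinearMap.ker f, θ.ρ m u ∈ LinearMap.ker f := by
    intro m u hu
    rw [LinearMap.mem_ker] at hu ⊢
    have := congrArg (fun (m' : θ →ₗ[ℂ] θ) => m' u) (hcomm m)
    simp only [LinearMap.comp_apply] at this
    rw [this, hu, map_zero]
  have hker : LinearMap.ker f = ⊥ := by
    rcases invariant_subspace_bot_or_top θ (LinearMap.ker f) hUinv with h | h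
    · exact h
    · exfalso
      apply hF0
      apply Action.Hom.ext
      refine FGModuleCat.hom_ext (LinearMap.ext fun x => ?_)
      have : x ∈ LinearMap.ker f := h ▸ Submodule.mem_top
      exact this
  have hinj : Function.Injective f := LinearMap.ker_eq_bot.mp hker
  have hbij : Function.Bijective f := ⟨hinj, (LinearMap.injective_iff_surjective).mp hinj⟩
  let e : θ ≃ₗ[ℂ] θ := LinearEquiv.ofBijective f hbij
  have hconj : θ.ρ (π n) = e.conj (θ.ρ n) := by
    refine LinearMap.ext fun v => ?_
    rw [LinearEquiv.conj_apply]
    simp only [LinearMap.comp_apply]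
    have h1 := congrArg (fun (m' : θ →ₗ[ℂ] θ) => m' (e.symm v)) (hcomm n)
    simp only [LinearMap.comp_apply] at h1
    have h2 : f ((e.symm v : θ)) = v := e.apply_symm_apply v
    calc (θ.ρ (π n)) v = (θ.ρ (π n)) (f (e.symm v)) := by rw [h2]
    _ = f ((θ.ρ n) (e.symm v)) := h1.symm
    _ = e ((θ.ρ n) (e.symm v)) := rfl
  show θ.character (π n) = θ.character n
  unfold FDRep.character
  rw [hconj, trace_conj']

lemma conv_lemma {G : Type} [Group G] (V : FDRep ℂ G) {N : Subgroup G} [Fintype N]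
    (k1 k2 : N → ℂ) :
    (∑ a : N, k1 a • V.ρ (a : G)) * (∑ b : N, k2 b • V.ρ (b : G))
      = ∑ m : N, (∑ a : N, k1 a * k2 (a⁻¹ * m)) • V.ρ (m : G) := by
  rw [Finset.sum_mul_sum]
  have h1 : ∀ a b : N, (k1 a • V.ρ (a : G)) * (k2 b • V.ρ (b : G))
      = (k1 a * k2 b) • V.ρ ((a*b : N) : G) := by
    intro a b
    rw [smul_mul_smul_comm, ← map_mul]
    rfl
  calc (∑ a : N, ∑ b : N, (k1 a • V.ρ (a : G)) * (k2 b • V.ρ (b : G)))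
      = ∑ a : N, ∑ b : N, (k1 a * k2 b) • V.ρ ((a*b : N) : G) := by
        exact Finset.sum_congr rfl fun a _ => Finset.sum_congr rfl fun b _ => h1 a b
    _ = ∑ a : N, ∑ m : N, (k1 a * k2 (a⁻¹ * m)) • V.ρ (m : G) := by
        refine Finset.sum_congr rfl fun a _ => ?_
        refine Fintype.sum_equiv (Equiv.mulLeft a) _ _ fun b => ?_
        simp only [Equiv.coe_mulLeft]
        rw [inv_mul_cancel_left]
    _ = ∑ m : N, (∑ a : N, k1 a * k2 (a⁻¹ * m)) • V.ρ (m : G) := by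
        rw [Finset.sum_comm]
        exact Finset.sum_congr rfl fun m _ => (Finset.sum_smul).symm

lemma conj_sum {G : Type} [Group G] (V : FDRep ℂ G) {N : Subgroup G} [Fintype N]
    (k : N → ℂ) (u : G) (f : N ≃ N) (hf : ∀ n : N, ((f n : N) : G) = u * n * u⁻¹) :
    V.ρ u * (∑ a : N, k a • V.ρ (a : G)) * V.ρ u⁻¹
      = ∑ a : N, k (f.symm a) • V.ρ (a : G) := by
  rw [Finset.mul_sum, Finset.sum_mul]
  refine Fintype.sum_equiv f _ _ fun a => ?_
  rw [Equiv.symm_apply_apply]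
  rw [mul_smul_comm, smul_mul_assoc]
  congr 1
  rw [← map_mul, ← map_mul, hf a]

/-- Clifford theory degree divisibility: if N ⊴ G, θ ∈ Irr(N), T = I_G(θ) is the inertia
group of θ, and χ ∈ Irr(G) lies over θ, then θ(1) ∣ χ(1) and |G : T| ∣ χ(1)/θ(1). -/
theorem clifford_degree_divides {G : Type} [Group G] [Fintype G] [DecidableEq G]
    (N : Subgroup G) [Fintype N] (hN : N.Normal)
    (θ : FDRep ℂ N) (hθ : CategoryTheory.Simple θ)
    (χ : FDRep ℂ G) (hχ : CategoryTheory.Simple χ)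
    (hover : ∑ n : N, χ.character (n : G) * (starRingEnd ℂ) (θ.character n) ≠ 0)
    (T : Subgroup G)
    (hT : ∀ g : G, g ∈ T ↔
      ∀ n : N, θ.character ⟨g * (n : G) * g⁻¹, hN.conj_mem n.1 n.2 g⟩ = θ.character n) :
    Module.finrank ℂ θ ∣ Module.finrank ℂ χ ∧
    T.index ∣ Module.finrank ℂ χ / Module.finrank ℂ θ := by
  classical
  haveI := hN
  haveI := hθ
  haveI := hχ
  haveI : Fintype (G ⧸ T) := Fintype.ofFinite _
  have hnθ : Nontrivial θ := nontrivial_of_simple θ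
  have hnχ : Nontrivial χ := nontrivial_of_simple χ
  have hdθpos : 0 < finrank ℂ θ := finrank_pos
  have hdθ0 : ((finrank ℂ θ : ℕ) : ℂ) ≠ 0 := Nat.cast_ne_zero.mpr hdθpos.ne'
  have hcN0 : ((Fintype.card N : ℕ) : ℂ) ≠ 0 := Nat.cast_ne_zero.mpr Fintype.card_pos.ne'
  set c : ℂ := (finrank ℂ θ : ℂ) / (Fintype.card N : ℂ) with hcdef
  -- twists
  set π : G → (N ≃* N) := fun u => (MulAut.conjNormal u⁻¹ : MulAut N) with hπdef
  have hπcoe : ∀ (u : G) (n : N), ((π u n : N) : G) = u⁻¹ * n * u := by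
    intro u n
    rw [hπdef]
    simp [MulAut.conjNormal_apply]
  have hπcancel : ∀ (u : G) (n : N), π u⁻¹ (π u n) = n := by
    intro u n
    apply Subtype.ext
    rw [hπcoe, hπcoe]
    group
  set τ : G → FDRep ℂ N := fun u => FDRep.of (θ.ρ.comp (π u).toMonoidHom) with hτdef
  set hh : G → ℕ := fun u => finrank ℂ (θ ⟶ τ u) with hhdef
  have key : ∀ u : G, c • ∑ a : N, θ.character a⁻¹ • θ.ρ (π u a)
      = ((hh u : ℕ) : ℂ) • (1 : Module.End ℂ θ) := fun u => twisted_proj θ (π u)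
  -- main operators
  set P : Module.End ℂ χ := c • ∑ n : N, θ.character n⁻¹ • χ.ρ (n : G) with hPdef
  set Q : G → Module.End ℂ χ := fun u => χ.ρ u * P * χ.ρ u⁻¹ with hQdef
  have hQform : ∀ u : G, Q u = c • ∑ n : N, θ.character ((π u n)⁻¹) • χ.ρ (n : G) := by
    intro u
    rw [hQdef]
    simp only
    rw [hPdef, mul_smul_comm, smul_mul_assoc]
    rw [conj_sum χ (fun n : N => θ.character n⁻¹) u (MulAut.conjNormal u).toEquiv
        (fun n => by simp [MulAut.conjNormal_apply])]
    congr 1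
  have hsub : ∀ (u : G) (n : N), (⟨u⁻¹ * (n : G) * u⁻¹⁻¹, hN.conj_mem n.1 n.2 u⁻¹⟩ : N) = π u n := by
    intro u n
    apply Subtype.ext
    rw [hπcoe]
    simp
  have hQT : ∀ u ∈ T, Q u = P := by
    intro u hu
    rw [hQform u, hPdef]
    congr 1
    refine Finset.sum_congr rfl fun n _ => ?_
    congr 1
    have h1 : (π u n)⁻¹ = π u n⁻¹ := (map_inv (π u) n).symm
    rw [h1]
    have h2 := (hT u⁻¹).mp (T.inv_mem hu) n⁻¹
    rw [hsub u n⁻¹] at h2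
    exact h2
  have hhT : ∀ u : G, u ∉ T → hh u = 0 := by
    intro u hu
    by_contra h0
    apply hu
    have hchar := char_eq_of_hom_twisted_ne_zero θ (π u) h0
    have hmem : u⁻¹ ∈ T := by
      rw [hT u⁻¹]
      intro n
      rw [hsub u n]
      exact hchar n
    simpa using T.inv_mem hmem
  -- the key multiplication identity
  have hPQ : ∀ u : G, P * Q u = ((hh u : ℕ) : ℂ) • Q u := by
    intro u
    have hcoef : ∀ m : N, c * (∑ a : N, θ.character a⁻¹ * θ.character ((π u (a⁻¹ * m))⁻¹))
        = ((hh u : ℕ) : ℂ) * θ.character ((π u m)⁻¹) := by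
      intro m
      have hc1 : c * (∑ a : N, θ.character a⁻¹ * θ.character ((π u (a⁻¹ * m))⁻¹))
          = trace ℂ θ (θ.ρ (π u m⁻¹) * (c • ∑ a : N, θ.character a⁻¹ • θ.ρ (π u a))) := by
        rw [mul_smul_comm, map_smul, smul_eq_mul]
        congr 1
        rw [Finset.mul_sum, map_sum]
        refine Finset.sum_congr rfl fun a _ => ?_
        rw [mul_smul_comm, map_smul, smul_eq_mul]
        congr 1
        rw [← map_mul, ← map_mul]
        show θ.character ((π u (a⁻¹ * m))⁻¹) = θ.character (π u (m⁻¹ * a))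
        congr 1
        rw [← map_inv]
        congr 1
        group
      have hc2 : trace ℂ θ (θ.ρ (π u m⁻¹) * (((hh u : ℕ) : ℂ) • (1 : Module.End ℂ θ)))
          = ((hh u : ℕ) : ℂ) * θ.character ((π u m)⁻¹) := by
        rw [mul_smul_comm, mul_one, map_smul, smul_eq_mul]
        congr 1
        show θ.character (π u m⁻¹) = θ.character ((π u m)⁻¹)
        congr 1
        exact map_inv (π u) m
      rw [hc1, key u, hc2]
    rw [hQform u, hPdef]
    rw [smul_mul_smul_comm]
    rw [conv_lemma χ (fun a : N => θ.character a⁻¹) (fun b : N => θ.character ((π u b)⁻¹))]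
    rw [mul_smul]
    rw [Finset.smul_sum, Finset.smul_sum, Finset.smul_sum, Finset.smul_sum]
    refine Finset.sum_congr rfl fun m _ => ?_
    rw [smul_smul, smul_smul, smul_smul, smul_smul]
    congr 1
    linear_combination c * hcoef m
  -- h 1 = 1
  have hπ1 : ∀ n : N, π 1 n = n := by
    intro n; apply Subtype.ext; rw [hπcoe]; simp
  have hQ1 : Q 1 = P := by
    simp only [hQdef]
    rw [inv_one, map_one, one_mul, mul_one]
  have hh1 : hh 1 = 1 := by
    have e1 := sum_char_mul_char_eq_finrank_hom (τ 1) θ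
    have e2 := sum_char_mul_char_eq_finrank_hom θ θ
    have hchar1 : ∀ a : N, (τ 1).character a = θ.character a := by
      intro a
      show θ.character (π 1 a) = θ.character a
      rw [hπ1]
    rw [Finset.sum_congr rfl (fun a _ => by rw [hchar1 a])] at e1
    have e3 : finrank ℂ (θ ⟶ θ) = 1 := by
      rw [FDRep.finrank_hom_simple_simple θ θ, if_pos ⟨Iso.refl θ⟩]
    have e4 : ((finrank ℂ (θ ⟶ τ 1) : ℕ) : ℂ) = ((1 : ℕ) : ℂ) := by
      apply mul_left_cancel₀ hcN0
      rw [← e1, e2, e3]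
    have : finrank ℂ (θ ⟶ τ 1) = 1 := Nat.cast_injective e4
    exact this
  have hPP : P * P = P := by
    have h1 := hPQ 1
    rw [hQ1, hh1] at h1
    simpa using h1
  -- the averaged projection E
  set E : Module.End ℂ χ := ∑ q : G ⧸ T, Q (Quotient.out q) with hEdef
  have hfold : ∀ x : G, χ.ρ x * P * χ.ρ x⁻¹ = Q x := fun x => by simp only [hQdef]
  have hQcoset : ∀ (g x : G), x ∈ T → Q (g * x) = Q g := by
    intro g x hx
    have h1 : χ.ρ x * P * χ.ρ x⁻¹ = P := by rw [hfold]; exact hQT x hx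
    simp only [hQdef]
    rw [mul_inv_rev, map_mul, map_mul]
    calc χ.ρ g * χ.ρ x * P * (χ.ρ x⁻¹ * χ.ρ g⁻¹)
        = χ.ρ g * (χ.ρ x * P * χ.ρ x⁻¹) * χ.ρ g⁻¹ := by noncomm_ring
      _ = χ.ρ g * P * χ.ρ g⁻¹ := by rw [h1]
  have hEconj : ∀ s : G, χ.ρ s * E * χ.ρ s⁻¹ = E := by
    intro s
    rw [hEdef, Finset.mul_sum, Finset.sum_mul]
    have hterm : ∀ q : G ⧸ T, χ.ρ s * Q (Quotient.out q) * χ.ρ s⁻¹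
        = Q (Quotient.out (s • q)) := by
      intro q
      have h1 : χ.ρ s * Q (Quotient.out q) * χ.ρ s⁻¹ = Q (s * Quotient.out q) := by
        simp only [hQdef]
        rw [map_mul, mul_inv_rev, map_mul]
        noncomm_ring
      rw [h1]
      have h2 : ((s * Quotient.out q : G) : G ⧸ T) = s • q := by
        rw [← smul_eq_mul]
        exact MulAction.Quotient.mk_smul_out T s q
      have h3 : ((Quotient.out (s • q) : G) : G ⧸ T) = s • q := QuotientGroup.out_eq' _
      have h4 : (s * Quotient.out q)⁻¹ * Quotient.out (s • q) ∈ T :=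
        QuotientGroup.eq.mp (h2.trans h3.symm)
      have h5 : Quotient.out (s • q)
          = (s * Quotient.out q) * ((s * Quotient.out q)⁻¹ * Quotient.out (s • q)) := by group
      rw [h5, hQcoset _ _ h4]
    rw [Finset.sum_congr rfl fun q _ => hterm q]
    exact Fintype.sum_equiv (MulAction.toPerm s) _ _ (fun q => rfl)
  have hEcomm : ∀ s : G, E ∘ₗ (χ.ρ s) = (χ.ρ s) ∘ₗ E := by
    intro s
    show E * χ.ρ s = χ.ρ s * E
    calc E * χ.ρ s = (χ.ρ s * E * χ.ρ s⁻¹) * χ.ρ s := by rw [hEconj s]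
      _ = χ.ρ s * E * (χ.ρ s⁻¹ * χ.ρ s) := by rw [mul_assoc]
      _ = χ.ρ s * E := by rw [← map_mul, inv_mul_cancel, map_one, mul_one]
  obtain ⟨lam, hlam⟩ := commutant_smul_id χ E hEcomm
  -- E is idempotent
  have hEE : E * E = E := by
    rw [hEdef, Finset.sum_mul]
    refine Finset.sum_congr rfl fun q _ => ?_
    rw [Finset.mul_sum]
    rw [Finset.sum_eq_single q]
    · -- diagonal
      simp only [hQdef]
      calc (χ.ρ (Quotient.out q) * P * χ.ρ (Quotient.out q)⁻¹) *
            (χ.ρ (Quotient.out q) * P * χ.ρ (Quotient.out q)⁻¹)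
          = χ.ρ (Quotient.out q) * (P * (χ.ρ (Quotient.out q)⁻¹ * χ.ρ (Quotient.out q)) * P) *
              χ.ρ (Quotient.out q)⁻¹ := by noncomm_ring
        _ = χ.ρ (Quotient.out q) * (P * P) * χ.ρ (Quotient.out q)⁻¹ := by
            rw [← map_mul, inv_mul_cancel, map_one, mul_one]
        _ = χ.ρ (Quotient.out q) * P * χ.ρ (Quotient.out q)⁻¹ := by rw [hPP, mul_assoc]
    · -- off-diagonal
      intro b _ hbq
      set x : G := (Quotient.out q)⁻¹ * Quotient.out b with hxdef
      have hx : x ∉ T := by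
        intro hmem
        apply hbq
        have : ((Quotient.out q : G) : G ⧸ T) = ((Quotient.out b : G) : G ⧸ T) :=
          QuotientGroup.eq.mpr hmem
        rw [QuotientGroup.out_eq', QuotientGroup.out_eq'] at this
        exact this.symm
      have hPQ0 : P * Q x = 0 := by
        have h1 := hPQ x
        rw [hhT x hx] at h1
        simpa using h1
      have hKill : P * χ.ρ x * P = 0 := by
        have h7 : χ.ρ x⁻¹ * χ.ρ x = 1 := by rw [← map_mul, inv_mul_cancel, map_one]
        have h8 : χ.ρ x * P * χ.ρ x⁻¹ = Q x := hfold x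
        calc P * χ.ρ x * P = P * χ.ρ x * P * (χ.ρ x⁻¹ * χ.ρ x) := by rw [h7, mul_one]
          _ = (P * (χ.ρ x * P * χ.ρ x⁻¹)) * χ.ρ x := by noncomm_ring
          _ = (P * Q x) * χ.ρ x := by rw [h8]
          _ = 0 := by rw [hPQ0, zero_mul]
      simp only [hQdef]
      have h9 : χ.ρ (Quotient.out q)⁻¹ * χ.ρ (Quotient.out b) = χ.ρ x := by
        rw [← map_mul, hxdef]
      calc (χ.ρ (Quotient.out q) * P * χ.ρ (Quotient.out q)⁻¹) *
            (χ.ρ (Quotient.out b) * P * χ.ρ (Quotient.out b)⁻¹)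
          = χ.ρ (Quotient.out q) * ((P * (χ.ρ (Quotient.out q)⁻¹ * χ.ρ (Quotient.out b)) * P)) *
              χ.ρ (Quotient.out b)⁻¹ := by noncomm_ring
        _ = χ.ρ (Quotient.out q) * (P * χ.ρ x * P) * χ.ρ (Quotient.out b)⁻¹ := by rw [h9]
        _ = 0 := by rw [hKill, mul_zero, zero_mul]
    · intro hq
      exact absurd (Finset.mem_univ q) hq
  -- restriction of χ to N and the multiplicity e
  set Res : FDRep ℂ N := FDRep.of (χ.ρ.comp N.subtype) with hResdef
  have hReschar : ∀ n : N, Res.character n = χ.character (n : G) := fun n => rfl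
  set e : ℕ := finrank ℂ (θ ⟶ Res) with hedef
  have htraceP : trace ℂ χ P = ((finrank ℂ θ : ℕ) : ℂ) * (e : ℂ) := by
    rw [hPdef, map_smul, map_sum]
    have h1 : ∀ n : N, trace ℂ χ (θ.character n⁻¹ • χ.ρ (n : G))
        = Res.character n * θ.character n⁻¹ := by
      intro n
      rw [map_smul, smul_eq_mul, mul_comm]
      rfl
    rw [Finset.sum_congr rfl fun n _ => h1 n]
    rw [sum_char_mul_char_eq_finrank_hom Res θ]
    rw [hcdef, smul_eq_mul]
    field_simp
    ring
  have he0 : (e : ℂ) ≠ 0 := by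
    intro h0
    apply hover
    have h1 : ∀ n : N, χ.character (n : G) * (starRingEnd ℂ) (θ.character n)
        = Res.character n * θ.character n⁻¹ := by
      intro n
      rw [char_inv_aux θ n, hReschar]
    rw [Finset.sum_congr rfl fun n _ => h1 n]
    rw [sum_char_mul_char_eq_finrank_hom Res θ, ← hedef, h0, mul_zero]
  have htraceQ : ∀ g : G, trace ℂ χ (Q g) = trace ℂ χ P := by
    intro g
    simp only [hQdef]
    rw [trace_mul_comm]
    rw [← mul_assoc, ← map_mul, inv_mul_cancel, map_one, one_mul]
  have hcardQuot : ((Fintype.card (G ⧸ T) : ℕ) : ℂ) = ((T.index : ℕ) : ℂ) := by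
    rw [Subgroup.index_eq_card, Nat.card_eq_fintype_card]
  have htraceE : trace ℂ χ E
      = ((T.index : ℕ) : ℂ) * (((finrank ℂ θ : ℕ) : ℂ) * (e : ℂ)) := by
    rw [hEdef, map_sum]
    rw [Finset.sum_congr rfl fun q _ => (htraceQ _).trans htraceP]
    rw [Finset.sum_const, Finset.card_univ, nsmul_eq_mul, hcardQuot]
  have htraceE2 : trace ℂ χ E = lam * ((finrank ℂ χ : ℕ) : ℂ) := by
    rw [hlam, map_smul, smul_eq_mul, trace_id]
  have hidx0 : ((T.index : ℕ) : ℂ) ≠ 0 := Nat.cast_ne_zero.mpr Subgroup.index_ne_zero_of_finite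
  have hlam0 : lam ≠ 0 := by
    intro h0
    rw [h0, zero_mul] at htraceE2
    rw [htraceE2] at htraceE
    exact (mul_ne_zero hidx0 (mul_ne_zero hdθ0 he0)) htraceE.symm
  have hlamsq : lam * lam = lam := by
    have h1 : E * E = (lam * lam) • (LinearMap.id : χ →ₗ[ℂ] χ) := by
      rw [hlam, smul_mul_smul_comm]
      congr 1
    rw [hEE, hlam] at h1
    obtain ⟨x, hx⟩ := exists_ne (0 : χ)
    have h2 := congrArg (fun (m : χ →ₗ[ℂ] χ) => m x) h1
    simp only [LinearMap.smul_apply, LinearMap.id_apply] at h2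
    exact (smul_left_injective ℂ hx h2).symm
  have hlam1 : lam = 1 := by
    apply mul_left_cancel₀ hlam0
    rw [hlamsq, mul_one]
  have h3 : ((finrank ℂ χ : ℕ) : ℂ)
      = ((T.index : ℕ) : ℂ) * (((finrank ℂ θ : ℕ) : ℂ) * (e : ℂ)) := by
    have h4 := htraceE2
    rw [hlam1, one_mul] at h4
    rw [← h4, htraceE]
  have hfinal : finrank ℂ χ = T.index * (finrank ℂ θ * e) := by
    have : ((finrank ℂ χ : ℕ) : ℂ) = ((T.index * (finrank ℂ θ * e) : ℕ) : ℂ) := by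
      push_cast
      rw [h3]
    exact_mod_cast this
  constructor
  · exact ⟨T.index * e, by rw [hfinal]; ring⟩
  · have hdiv : finrank ℂ χ / finrank ℂ θ = T.index * e := by
      rw [hfinal, show T.index * (finrank ℂ θ * e) = finrank ℂ θ * (T.index * e) by ring]
      exact Nat.mul_div_cancel_left _ hdθpos
    rw [hdiv]
    exact dvd_mul_right _ _
end

section
/- Let N ⊴ G be finite groups with G/N nonabelian simple, and let θ ∈ Irr(N) be G-invariant. If the Schur multiplier of G/N is trivial, then θ extends to an irreducible character of G. -/
set_option maxHeartbeats 1000000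

open CategoryTheory Module

noncomputable section IsaacsAux

namespace IsaacsAux

variable {k H : Type} [Field k] [Group H]

def subρ (X : FDRep k H) (p : Submodule k X)
    (hp : ∀ h : H, ∀ v ∈ p, X.ρ h v ∈ p) : Representation k H p where
  toFun h := (X.ρ h).restrict (fun v hv => hp h v hv)
  map_one' := LinearMap.ext fun v => Subtype.ext <| by
    simp [LinearMap.restrict_apply]
  map_mul' a c := LinearMap.ext fun v => Subtype.ext <| by
    simp [LinearMap.restrict_apply]

def subRepIncl (X : FDRep k H) (p : Submodule k X)
    (hp : ∀ h : H, ∀ v ∈ p, X.ρ h v ∈ p) : FDRep.of (subρ X p hp) ⟶ X where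
  hom := FGModuleCat.ofHom p.subtype
  comm _ := rfl

theorem subrep_bot_or_top (X : FDRep k H) [Simple X] (p : Submodule k X)
    (hp : ∀ h : H, ∀ v ∈ p, X.ρ h v ∈ p) : p = ⊥ ∨ p = ⊤ := by
  by_cases hbot : p = ⊥
  · exact Or.inl hbot
  right
  set j := subRepIncl X p hp with hj
  have hjhom : j.hom.hom.hom = p.subtype := rfl
  haveI : Mono j := by
    constructor
    intro Z a b w
    apply Action.Hom.ext
    have hw := congrArg Action.Hom.hom w
    rw [Action.comp_hom, Action.comp_hom] at hw
    apply FGModuleCat.hom_ext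
    apply LinearMap.ext
    intro z
    have := LinearMap.congr_fun (congrArg (fun t => t.hom.hom) hw) z
    exact Subtype.ext this
  have hjne : j ≠ 0 := by
    obtain ⟨v, hv, hv0⟩ := Submodule.exists_mem_ne_zero_of_ne_bot hbot
    intro h0
    have h1 := congrArg Action.Hom.hom h0
    rw [Action.zero_hom] at h1
    have := LinearMap.congr_fun (congrArg (fun t => t.hom.hom) h1) ⟨v, hv⟩
    exact hv0 this
  haveI : IsIso j := isIso_of_mono_of_nonzero hjne
  have hsurj : Function.Surjective j.hom.hom.hom := by
    intro v
    refine ⟨(inv j).hom.hom.hom v, ?_⟩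
    have h2 := congrArg Action.Hom.hom (IsIso.inv_hom_id j)
    rw [Action.comp_hom, Action.id_hom] at h2
    exact LinearMap.congr_fun (congrArg (fun t => t.hom.hom) h2) v
  rw [eq_top_iff]
  intro v _
  obtain ⟨w, hw⟩ := hsurj v
  rw [hjhom] at hw
  rw [← hw]
  exact w.2

theorem exists_ne_zero_vec (X : FDRep k H) [Simple X] : ∃ v : X, v ≠ 0 := by
  by_contra h
  push_neg at h
  refine id_nonzero X ?_
  apply Action.Hom.ext
  apply FGModuleCat.hom_ext
  apply LinearMap.ext
  intro v
  exact (h v).trans (h _).symm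

theorem exists_smul_id {k H : Type} [Field k] [IsAlgClosed k] [Group H] (X : FDRep k H) [Simple X]
    (v : X →ₗ[k] X) (hv : ∀ h : H, v ∘ₗ X.ρ h = X.ρ h ∘ₗ v) :
    ∃ c : k, v = c • LinearMap.id := by
  let φ : X ⟶ X := ⟨FGModuleCat.ofHom v, fun h => FGModuleCat.hom_ext (hv h)⟩
  obtain ⟨c, hc⟩ := endomorphism_simple_eq_smul_id k φ
  refine ⟨c, ?_⟩
  have h2 := congrArg Action.Hom.hom hc
  rw [Action.smul_hom, Action.id_hom] at h2
  exact (congrArg (fun t => t.hom.hom) h2).symm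

theorem hom_finrank_char {k H : Type} [Field k] [Group H] [Fintype H]
    [Invertible (Fintype.card H : k)] (Y Z : FDRep k H) :
    ((finrank k (Y ⟶ Z) : k)) =
      ⅟(Fintype.card H : k) • ∑ h : H, Y.character h⁻¹ * Z.character h := by
  have e := (Representation.linHom.invariantsEquivFDRepHom (G := H) Y Z).finrank_eq
  rw [← e]
  have h2' : ((finrank k (Representation.linHom Y.ρ Z.ρ).invariants : k)) =
      ⅟(Fintype.card H : k) • ∑ g : H, (FDRep.of (Representation.linHom Y.ρ Z.ρ)).character g :=
    by
      haveI : Invertible (Nat.card H : k) := by rwa [Nat.card_eq_fintype_card]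
      have := FDRep.average_char_eq_finrank_invariants (G := H) (FDRep.of (Representation.linHom Y.ρ Z.ρ))
      rw [Nat.card_eq_fintype_card, ← invOf_eq_inv, ← smul_eq_mul] at this
      exact this.symm
  rw [h2']
  congr 1
  exact Finset.sum_congr rfl fun h _ => FDRep.char_linHom Y Z h

variable {G : Type} [Group G]

def conjMon {N : Subgroup G} (hN : N.Normal) (g : G) : N →* N where
  toFun n := ⟨g * n * g⁻¹, hN.conj_mem n.1 n.2 g⟩
  map_one' := by ext; simp
  map_mul' a b := by ext; simp

theorem key_intertwiner {N : Subgroup G} (hN : N.Normal) [Fintype N]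
    [Invertible ((Fintype.card N : ℂ))]
    (θ : FDRep ℂ N) [Simple θ]
    (hinv : ∀ g : G, ∀ n : N,
      θ.character ⟨g * (n : G) * g⁻¹, hN.conj_mem n.1 n.2 g⟩ = θ.character n)
    (g : G) :
    ∃ u : θ →ₗ[ℂ] θ, Function.Bijective u ∧
      ∀ n : N, u ∘ₗ θ.ρ n = θ.ρ ⟨g * (n : G) * g⁻¹, hN.conj_mem n.1 n.2 g⟩ ∘ₗ u := by
  set W := FDRep.of (θ.ρ.comp (conjMon hN g)) with hW
  have hchar : ∀ m : N, W.character m = θ.character m := fun m => hinv g m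
  have hfr : finrank ℂ (θ ⟶ W) = finrank ℂ (θ ⟶ θ) := by
    have h1 : ((finrank ℂ (θ ⟶ W) : ℂ)) = ((finrank ℂ (θ ⟶ θ) : ℂ)) := by
      rw [hom_finrank_char, hom_finrank_char]
      congr 1
      exact Finset.sum_congr rfl fun n _ => by rw [hchar n]
    exact_mod_cast h1
  have h1 : finrank ℂ (θ ⟶ W) = 1 := by
    rw [hfr]; exact finrank_endomorphism_simple_eq_one ℂ θ
  haveI : Nontrivial (θ ⟶ W) := Module.nontrivial_of_finrank_eq_succ h1
  obtain ⟨u, hu0⟩ := exists_ne (0 : θ ⟶ W)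
  have hcomm : ∀ n : N, (u.hom.hom.hom : θ →ₗ[ℂ] θ) ∘ₗ θ.ρ n
      = θ.ρ ⟨g * (n : G) * g⁻¹, hN.conj_mem n.1 n.2 g⟩ ∘ₗ (u.hom.hom.hom : θ →ₗ[ℂ] θ) :=
    fun n => congrArg (fun t => t.hom.hom) (u.comm n)
  set u' : θ →ₗ[ℂ] θ := u.hom.hom.hom with hu'
  have hinj : Function.Injective u' := by
    have hK := subrep_bot_or_top θ (LinearMap.ker u') (by
      intro n v hv
      rw [LinearMap.mem_ker] at hv ⊢
      have hcp : u' (θ.ρ n v) = θ.ρ ⟨g * (n : G) * g⁻¹, hN.conj_mem n.1 n.2 g⟩ (u' v) :=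
        LinearMap.congr_fun (hcomm n) v
      rw [hcp, hv, map_zero])
    rcases hK with h | h
    · exact LinearMap.ker_eq_bot.1 h
    · exfalso
      apply hu0
      apply Action.Hom.ext
      rw [Action.zero_hom]
      apply FGModuleCat.hom_ext
      exact LinearMap.ker_eq_top.1 h
  exact ⟨u', ⟨hinj, (LinearMap.injective_iff_surjective).1 hinj⟩, hcomm⟩

theorem coboundary_step {Q : Type} [Group Q] (cbar : Q → Q → ℂˣ)
    (hcocQ : ∀ q r t : Q, cbar r t * cbar q (r * t) = cbar q r * cbar (q * r) t)
    (hschur : Subsingleton (groupCohomology (Rep.trivial ℤ Q (Additive ℂˣ)) 2)) :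
    ∃ b : Q → ℂˣ, ∀ q r, cbar q r = b r * (b (q * r))⁻¹ * b q := by
  haveI : Subsingleton (groupCohomology.H2 (Rep.trivial ℤ Q (Additive ℂˣ))) := by
    exact hschur
  have hfmem : (fun p : Q × Q => Additive.ofMul (cbar p.1 p.2)) ∈
      groupCohomology.cocycles₂ (Rep.trivial ℤ Q (Additive ℂˣ)) := by
    rw [groupCohomology.mem_cocycles₂_iff]
    intro q r t
    show Additive.ofMul (cbar (q * r) t) + Additive.ofMul (cbar q r) = Additive.ofMul (cbar r t) + Additive.ofMul (cbar q (r * t))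
    rw [← ofMul_mul, ← ofMul_mul]
    refine congrArg Additive.ofMul ?_
    rw [mul_comm (cbar (q * r) t)]
    exact (hcocQ q r t).symm
  set fc : groupCohomology.cocycles₂ (Rep.trivial ℤ Q (Additive ℂˣ)) := ⟨_, hfmem⟩ with hfc
  have hfb : (fc : Q × Q → Additive ℂˣ) ∈ groupCohomology.coboundaries₂ (Rep.trivial ℤ Q (Additive ℂˣ)) :=
    (groupCohomology.H2π_eq_zero_iff fc).1 (Subsingleton.elim _ _)
  obtain ⟨x, hx⟩ := hfb
  set x' : Q → Additive ℂˣ := fun q => x q with hx'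
  refine ⟨fun q => Additive.toMul (x' q), ?_⟩
  intro q r
  have h1 := congrFun hx (q, r)
  rw [groupCohomology.d₁₂_hom_apply] at h1
  have h3 : fc (q, r) = Additive.ofMul (cbar q r) := rfl
  rw [h3] at h1
  have h1' : x' r - x' (q * r) + x' q = Additive.ofMul (cbar q r) := h1
  have h4 := congrArg Additive.toMul h1'
  rw [toMul_add, toMul_sub, toMul_ofMul, div_eq_mul_inv] at h4
  exact h4.symm

end IsaacsAux

end IsaacsAux

open IsaacsAux

/-- Isaacs, Theorem 11.7: if N ⊴ G with G/N nonabelian simple, θ ∈ Irr(N) is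
G-invariant, and the Schur multiplier H²(G/N, ℂ*) is trivial, then θ extends to an
irreducible character of G. -/
theorem invariant_character_extends {G : Type} [Group G] [Fintype G]
    (N : Subgroup G) (hN : N.Normal)
    (hsimple : IsSimpleGroup (G ⧸ N))
    (hnonab : ¬ ∀ a b : G ⧸ N, a * b = b * a)
    (θ : FDRep ℂ N) (hθ : CategoryTheory.Simple θ)
    (hinv : ∀ g : G, ∀ n : N,
      θ.character ⟨g * (n : G) * g⁻¹, hN.conj_mem n.1 n.2 g⟩ = θ.character n)
    (hschur : Subsingleton
      (groupCohomology (Rep.trivial ℤ (G ⧸ N) (Additive ℂˣ)) 2)) :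
    ∃ χ : FDRep ℂ G, CategoryTheory.Simple χ ∧
      ∀ n : N, χ.character (n : G) = θ.character n := by
  classical
  haveI := hθ
  haveI : Fintype N := Fintype.ofFinite N
  haveI : Invertible ((Fintype.card N : ℂ)) :=
    invertibleOfNonzero (Nat.cast_ne_zero.2 Fintype.card_ne_zero)
  obtain ⟨v0, hv0⟩ := exists_ne_zero_vec θ
  -- a transversal of N in G, normalized at 1
  obtain ⟨s, hs1, hsm⟩ : ∃ s : G ⧸ N → G, s 1 = 1 ∧ ∀ q, ((s q : G) : G ⧸ N) = q := by
    refine ⟨fun q => if q = 1 then 1 else Quotient.out q, by simp, fun q => ?_⟩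
    by_cases h : q = 1
    · simp [h]
    · simp only [h, if_false]
      exact QuotientGroup.out_eq' q
  -- intertwiners indexed by the quotient, normalized at 1
  have keyQ : ∀ q : G ⧸ N, ∃ u : θ →ₗ[ℂ] θ, (Function.Bijective u ∧
      ∀ n : N, u ∘ₗ θ.ρ n =
        θ.ρ ⟨s q * (n : G) * (s q)⁻¹, hN.conj_mem n.1 n.2 (s q)⟩ ∘ₗ u) ∧
      (q = 1 → u = LinearMap.id) := by
    intro q
    by_cases h : q = 1
    · refine ⟨LinearMap.id, ⟨Function.bijective_id, ?_⟩, fun _ => rfl⟩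
      intro n
      have he : (⟨s q * (n : G) * (s q)⁻¹, hN.conj_mem n.1 n.2 (s q)⟩ : N) = n := by
        apply Subtype.ext
        simp [h, hs1]
      rw [he]
      simp
    · obtain ⟨u, hb, hcomm⟩ := key_intertwiner hN θ hinv (s q)
      exact ⟨u, ⟨hb, hcomm⟩, fun h1 => absurd h1 h⟩
  choose U hU hU1 using keyQ
  -- the coset decomposition
  have memm : ∀ g : G, g * (s ((g : G ⧸ N)))⁻¹ ∈ N := by
    intro g
    have h1 : ((s ((g : G ⧸ N)) : G) : G ⧸ N) = (g : G ⧸ N) := hsm _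
    exact hN.mem_comm (QuotientGroup.eq.mp h1)
  set mElt : G → N := fun g => ⟨g * (s ((g : G ⧸ N)))⁻¹, memm g⟩ with hmElt
  set P : G → (θ →ₗ[ℂ] θ) := fun g => θ.ρ (mElt g) ∘ₗ U ((g : G ⧸ N)) with hP
  have hPchar : ∀ (g : G) (m : N) (q : G ⧸ N), g = (m : G) * s q → P g = θ.ρ m ∘ₗ U q := by
    intro g m q hg
    have hmq : ((m : G) : G ⧸ N) = 1 := (QuotientGroup.eq_one_iff _).mpr m.2
    have hq : (g : G ⧸ N) = q := by
      rw [hg, QuotientGroup.mk_mul, hmq, one_mul, hsm]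
    have hm : mElt g = m := by
      apply Subtype.ext
      show g * (s ((g : G ⧸ N)))⁻¹ = (m : G)
      rw [hq, hg]
      group
    show θ.ρ (mElt g) ∘ₗ U ((g : G ⧸ N)) = θ.ρ m ∘ₗ U q
    rw [hm, hq]
  have hdecomp : ∀ g : G, g = ((mElt g : N) : G) * s ((g : G ⧸ N)) := by
    intro g
    show g = g * (s ((g : G ⧸ N)))⁻¹ * s ((g : G ⧸ N))
    group
  have PL : ∀ (n : N) (g : G), P ((n : G) * g) = θ.ρ n ∘ₗ P g := by
    intro n g
    have hd : ((n : G) * g) = ((n * mElt g : N) : G) * s ((g : G ⧸ N)) := by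
      push_cast
      show (n : G) * g = (n : G) * (g * (s ((g : G ⧸ N)))⁻¹) * s ((g : G ⧸ N))
      group
    rw [hPchar _ _ _ hd, map_mul, Module.End.mul_eq_comp, LinearMap.comp_assoc]
  have PR : ∀ (g : G) (n : N), P (g * (n : G)) = P g ∘ₗ θ.ρ n := by
    intro g n
    have hd : (g * (n : G)) = ((mElt g * ⟨s ((g : G ⧸ N)) * (n : G) * (s ((g : G ⧸ N)))⁻¹,
        hN.conj_mem n.1 n.2 (s ((g : G ⧸ N)))⟩ : N) : G) * s ((g : G ⧸ N)) := by
      push_cast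
      show g * (n : G) = (g * (s ((g : G ⧸ N)))⁻¹) *
        (s ((g : G ⧸ N)) * (n : G) * (s ((g : G ⧸ N)))⁻¹) * s ((g : G ⧸ N))
      group
    rw [hPchar _ _ _ hd, map_mul, Module.End.mul_eq_comp, LinearMap.comp_assoc,
      ← (hU ((g : G ⧸ N))).2 n, ← LinearMap.comp_assoc]
  have PN : ∀ n : N, P (n : G) = θ.ρ n := by
    intro n
    have hd : ((n : G)) = ((n : N) : G) * s 1 := by rw [hs1, mul_one]
    rw [hPchar _ _ _ hd, hU1 1 rfl, LinearMap.comp_id]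
  have Pcomm : ∀ (g : G) (n : N), P g ∘ₗ θ.ρ n
      = θ.ρ ⟨g * (n : G) * g⁻¹, hN.conj_mem n.1 n.2 g⟩ ∘ₗ P g := by
    intro g n
    rw [← PR g n]
    have hd : (g * (n : G)) = ((⟨g * (n : G) * g⁻¹, hN.conj_mem n.1 n.2 g⟩ : N) : G) * g := by
      show g * (n : G) = g * (n : G) * g⁻¹ * g
      group
    conv_lhs => rw [hd]
    exact PL _ g
  have hρbij : ∀ m : N, Function.Bijective (θ.ρ m) := by
    intro m
    refine Function.bijective_iff_has_inverse.2 ⟨θ.ρ m⁻¹, fun v => ?_, fun v => ?_⟩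
    · rw [← Module.End.mul_apply, ← map_mul, inv_mul_cancel, map_one, Module.End.one_apply]
    · rw [← Module.End.mul_apply, ← map_mul, mul_inv_cancel, map_one, Module.End.one_apply]
  have Pbij : ∀ g : G, Function.Bijective (P g) := by
    intro g
    exact (hρbij (mElt g)).comp (hU ((g : G ⧸ N))).1
  have hPne : ∀ (g : G) (a b : ℂ), a • P g = b • P g → a = b := by
    intro g a b hab
    have h1 : P g v0 ≠ 0 := by
      intro h0
      exact hv0 ((Pbij g).1 (by rw [h0, map_zero]))
    have h2 : a • P g v0 = b • P g v0 := by
      have := LinearMap.congr_fun hab v0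
      simpa using this
    by_contra hne
    have h3 : (a - b) • P g v0 = 0 := by
      rw [sub_smul, h2, sub_self]
    rcases smul_eq_zero.1 h3 with h | h
    · exact hne (sub_eq_zero.1 h)
    · exact h1 h
  have huniq : ∀ (g : G) (a b : ℂˣ), (a : ℂ) • P g = (b : ℂ) • P g → a = b :=
    fun g a b h => Units.ext (hPne g _ _ h)
  -- the 2-cocycle
  have hc : ∀ g h : G, ∃ a : ℂˣ, P g ∘ₗ P h = (a : ℂ) • P (g * h) := by
    intro g h
    set E := LinearEquiv.ofBijective (P (g * h)) (Pbij (g * h)) with hE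
    set w : θ →ₗ[ℂ] θ := E.symm.toLinearMap ∘ₗ (P g ∘ₗ P h) with hw
    have hEap : ∀ v : θ, E v = P (g * h) v := fun v => rfl
    have hcomm : ∀ n : N, w ∘ₗ θ.ρ n = θ.ρ n ∘ₗ w := by
      intro n
      have hgh : (⟨g * ((h * (n : G) * h⁻¹)) * g⁻¹,
          hN.conj_mem _ (hN.conj_mem n.1 n.2 h) g⟩ : N)
          = ⟨(g * h) * (n : G) * (g * h)⁻¹, hN.conj_mem n.1 n.2 (g * h)⟩ := by
        apply Subtype.ext
        show g * (h * (n : G) * h⁻¹) * g⁻¹ = (g * h) * (n : G) * (g * h)⁻¹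
        group
      have h1 : (P g ∘ₗ P h) ∘ₗ θ.ρ n
          = θ.ρ ⟨(g * h) * (n : G) * (g * h)⁻¹, hN.conj_mem n.1 n.2 (g * h)⟩
            ∘ₗ (P g ∘ₗ P h) := by
        rw [LinearMap.comp_assoc, Pcomm h n, ← LinearMap.comp_assoc, Pcomm g, ← hgh,
          LinearMap.comp_assoc]
      have h2 : ∀ x : θ,
          E.symm (θ.ρ ⟨(g * h) * (n : G) * (g * h)⁻¹, hN.conj_mem n.1 n.2 (g * h)⟩ x)
          = θ.ρ n (E.symm x) := by
        intro x
        apply E.injective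
        rw [E.apply_symm_apply]
        have h3 := LinearMap.congr_fun (Pcomm (g * h) n) (E.symm x)
        calc (θ.ρ ⟨(g * h) * (n : G) * (g * h)⁻¹, hN.conj_mem n.1 n.2 (g * h)⟩) x
            = (θ.ρ ⟨(g * h) * (n : G) * (g * h)⁻¹, hN.conj_mem n.1 n.2 (g * h)⟩)
                ((P (g * h)) (E.symm x)) := by
              congr 1
              exact (E.apply_symm_apply x).symm
          _ = (P (g * h) ∘ₗ θ.ρ n) (E.symm x) := h3.symm
          _ = E ((θ.ρ n) (E.symm x)) := rfl
      apply LinearMap.ext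
      intro v
      rw [LinearMap.comp_apply, LinearMap.comp_apply]
      show E.symm ((P g ∘ₗ P h) (θ.ρ n v)) = θ.ρ n (E.symm ((P g ∘ₗ P h) v))
      rw [← LinearMap.comp_apply ((P g ∘ₗ P h)), LinearMap.congr_fun h1 v]
      rw [LinearMap.comp_apply]
      exact h2 _
    obtain ⟨a, ha⟩ := exists_smul_id θ w hcomm
    have hane : a ≠ 0 := by
      intro h0
      rw [h0, zero_smul] at ha
      have hwv : w v0 = 0 := by rw [ha]; rfl
      have hwbij : Function.Bijective w := by
        rw [hw]
        exact E.symm.bijective.comp ((Pbij g).comp (Pbij h))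
      exact hv0 (hwbij.1 (by rw [hwv, map_zero]))
    refine ⟨Units.mk0 a hane, ?_⟩
    apply LinearMap.ext
    intro v
    apply E.symm.injective
    have h6 : E.symm ((P g ∘ₗ P h) v) = a • v := LinearMap.congr_fun ha v
    have h8 : E.symm ((P (g * h)) v) = v := E.symm_apply_apply v
    have h7 : E.symm (((((Units.mk0 a hane : ℂˣ) : ℂ)) • P (g * h)) v) = a • v := by
      have h9 : ((((Units.mk0 a hane : ℂˣ) : ℂ)) • P (g * h)) v
          = (((Units.mk0 a hane : ℂˣ) : ℂ)) • (P (g * h)) v := rfl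
      rw [h9, map_smul, h8]
      rfl
    exact h6.trans h7.symm
  choose cc hcc using hc
  -- the cocycle only depends on the cosets
  have C1 : ∀ (g h : G) (n : N), cc g ((n : G) * h) = cc g h := by
    intro g h n
    apply huniq (g * ((n : G) * h))
    have heq : ((⟨g * (n : G) * g⁻¹, hN.conj_mem n.1 n.2 g⟩ : N) : G) * (g * h)
        = g * ((n : G) * h) := by
      show g * (n : G) * g⁻¹ * (g * h) = g * ((n : G) * h)
      group
    rw [← hcc g ((n : G) * h), PL n h, ← LinearMap.comp_assoc, Pcomm g n,
      LinearMap.comp_assoc, hcc g h, LinearMap.comp_smul, ← PL _ (g * h), heq]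
  have C2 : ∀ (g h : G) (n : N), cc (g * (n : G)) h = cc g h := by
    intro g h n
    apply huniq (g * (n : G) * h)
    have heq : g * ((n : G) * h) = g * (n : G) * h := by group
    rw [← hcc (g * (n : G)) h, PR g n, LinearMap.comp_assoc, ← PL n h, hcc g ((n : G) * h),
      C1 g h n, heq]
  have C2' : ∀ (g h : G) (n : N), cc ((n : G) * g) h = cc g h := by
    intro g h n
    apply huniq ((n : G) * g * h)
    have heq : (n : G) * (g * h) = (n : G) * g * h := by group
    rw [← hcc ((n : G) * g) h, PL n g, LinearMap.comp_assoc, hcc g h, LinearMap.comp_smul,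
      ← PL n (g * h), heq]
  have hbar : ∀ g h : G, cc g h = cc (s ((g : G ⧸ N))) (s ((h : G ⧸ N))) := by
    intro g h
    calc cc g h = cc (((mElt g : N) : G) * s ((g : G ⧸ N))) h := by
          conv_lhs => rw [hdecomp g]
      _ = cc (s ((g : G ⧸ N))) h := C2' _ _ _
      _ = cc (s ((g : G ⧸ N))) (((mElt h : N) : G) * s ((h : G ⧸ N))) := by
          conv_lhs => rw [hdecomp h]
      _ = cc (s ((g : G ⧸ N))) (s ((h : G ⧸ N))) := C1 _ _ _
  set cbar : (G ⧸ N) → (G ⧸ N) → ℂˣ := fun q r => cc (s q) (s r) with hcbardef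
  have hcbar : ∀ g h : G, cc g h = cbar ((g : G ⧸ N)) ((h : G ⧸ N)) := hbar
  -- cocycle identity
  have hcoc : ∀ g h j : G, cc h j * cc g (h * j) = cc g h * cc (g * h) j := by
    intro g h j
    apply huniq (g * (h * j))
    have heq : g * h * j = g * (h * j) := by group
    rw [Units.val_mul, Units.val_mul, mul_smul, mul_smul,
      ← hcc g (h * j), ← LinearMap.comp_smul, ← hcc h j, ← LinearMap.comp_assoc,
      hcc g h, LinearMap.smul_comp, hcc (g * h) j, heq]
  have hcocQ : ∀ q r t : G ⧸ N,
      cbar r t * cbar q (r * t) = cbar q r * cbar (q * r) t := by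
    intro q r t
    have h1 := hcoc (s q) (s r) (s t)
    have h2 : cc (s q) (s r * s t) = cbar q (r * t) := by
      rw [hcbar, hsm, QuotientGroup.mk_mul, hsm, hsm]
    have h3 : cc (s q * s r) (s t) = cbar (q * r) t := by
      rw [hcbar, hsm, QuotientGroup.mk_mul, hsm, hsm]
    rw [h2, h3] at h1
    exact h1
  -- normalization
  have hPone : P 1 = LinearMap.id := by
    have h1 := PN 1
    rw [OneMemClass.coe_one] at h1
    rw [h1, map_one]
    rfl
  have c11 : cc 1 1 = 1 := by
    apply huniq 1
    have := hcc 1 1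
    rw [hPone, one_mul] at this
    rw [← this]
    simp [hPone]
  have cbar11 : cbar 1 1 = 1 := by
    rw [hcbardef]
    show cc (s 1) (s 1) = 1
    rw [hs1]
    exact c11
  -- kill the cocycle
  obtain ⟨b, hb⟩ := coboundary_step cbar hcocQ hschur
  have b1 : b 1 = 1 := by
    have h1 := hb 1 1
    rw [cbar11, one_mul] at h1
    have : (1 : ℂˣ) = b 1 := by
      rw [h1]
      group
    exact this.symm
  -- the extended representation
  have hmap_mul : ∀ g h : G, (((b (((g * h : G) : G ⧸ N)))⁻¹ : ℂˣ) : ℂ) • P (g * h)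
      = ((((b ((g : G ⧸ N)))⁻¹ : ℂˣ) : ℂ) • P g) * ((((b ((h : G ⧸ N)))⁻¹ : ℂˣ) : ℂ) • P h) := by
    intro g h
    have hu : (b (((g * h : G) : G ⧸ N)))⁻¹ = (b ((g : G ⧸ N)))⁻¹ * (b ((h : G ⧸ N)))⁻¹ * cc g h := by
      rw [hcbar g h, hb ((g : G ⧸ N)) ((h : G ⧸ N)), QuotientGroup.mk_mul]
      apply Units.ext
      push_cast
      field_simp
    rw [hu]
    rw [Module.End.mul_eq_comp, LinearMap.smul_comp, LinearMap.comp_smul, hcc g h]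
    rw [smul_smul, smul_smul]
    norm_cast
  set ρhat : Representation ℂ G θ := {
    toFun := fun g => (((b ((g : G ⧸ N)))⁻¹ : ℂˣ) : ℂ) • P g
    map_one' := by
      show (((b (((1 : G) : G ⧸ N)))⁻¹ : ℂˣ) : ℂ) • P 1 = 1
      have h1 : ((1 : G) : G ⧸ N) = 1 := rfl
      rw [h1, b1, hPone]
      simp
      rfl
    map_mul' := fun g h => hmap_mul g h } with hρhat
  have hres : ∀ n : N, ρhat ((n : G)) = θ.ρ n := by
    intro n
    show (((b (((n : G) : G ⧸ N)))⁻¹ : ℂˣ) : ℂ) • P (n : G) = θ.ρ n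
    have h1 : (((n : G)) : G ⧸ N) = 1 := (QuotientGroup.eq_one_iff _).mpr n.2
    rw [h1, b1, PN n]
    simp
  set χ : FDRep ℂ G := FDRep.of ρhat with hχ
  have hχρ : ∀ g : G, χ.ρ g = ρhat g := fun g => rfl
  refine ⟨χ, ?_, ?_⟩
  · -- χ is simple
    constructor
    intro Y f hMono
    constructor
    · intro hIso h0
      have h2 : (𝟙 χ : χ ⟶ χ) = 0 := by
        have h2' := congrArg (fun t => inv f ≫ t) h0
        simp only [IsIso.inv_hom_id, Limits.comp_zero] at h2'
        exact h2'
      have h3 := congrArg Action.Hom.hom h2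
      rw [Action.id_hom, Action.zero_hom] at h3
      have h4 := LinearMap.congr_fun (congrArg (fun t => t.hom.hom) h3) v0
      exact hv0 h4
    · intro hne
      -- injectivity from Mono
      have hinj : Function.Injective f.hom.hom.hom := by
        rw [← LinearMap.ker_eq_bot]
        by_contra hker
        -- build the inclusion of the kernel subrep of Y
        have hkinv : ∀ g : G, ∀ v ∈ LinearMap.ker f.hom.hom.hom, Y.ρ g v ∈
            LinearMap.ker f.hom.hom.hom := by
          intro g v hv
          rw [LinearMap.mem_ker] at hv ⊢
          have hc : f.hom.hom.hom ((Y.ρ g) v) = (χ.ρ g) (f.hom.hom.hom v) :=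
            LinearMap.congr_fun (congrArg (fun t => t.hom.hom) (f.comm g)) v
          exact hc.trans ((congrArg (χ.ρ g) hv).trans (map_zero _))
        set j := subRepIncl Y (LinearMap.ker f.hom.hom.hom) hkinv with hj
        have hjf : j ≫ f = 0 := by
          apply Action.Hom.ext
          rw [Action.comp_hom, Action.zero_hom]
          apply FGModuleCat.hom_ext
          apply LinearMap.ext
          intro v
          exact v.2
        have hj0 : j = 0 := by
          have := hMono.right_cancellation j 0 (by rw [hjf, Limits.zero_comp])
          exact this
        obtain ⟨v, hvk, hvne⟩ := Submodule.exists_mem_ne_zero_of_ne_bot hker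
        have := congrArg Action.Hom.hom hj0
        rw [Action.zero_hom] at this
        have h4 := LinearMap.congr_fun (congrArg (fun t => t.hom.hom) this) ⟨v, hvk⟩
        exact hvne h4
      -- surjectivity from simplicity of θ
      have hrinv : ∀ n : N, ∀ v ∈ LinearMap.range f.hom.hom.hom,
          θ.ρ n v ∈ LinearMap.range f.hom.hom.hom := by
        intro n v hv
        obtain ⟨y, hy⟩ := hv
        refine ⟨Y.ρ ((n : G)) y, ?_⟩
        have hc : f.hom.hom.hom ((Y.ρ ((n : G))) y) = (χ.ρ ((n : G))) (f.hom.hom.hom y) :=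
          LinearMap.congr_fun (congrArg (fun t => t.hom.hom) (f.comm ((n : G)))) y
        have h3 : χ.ρ ((n : G)) = θ.ρ n := by rw [hχρ]; exact hres n
        have h2 : (χ.ρ ((n : G))) (f.hom.hom.hom y) = θ.ρ n v := by
          rw [h3]
          exact congrArg (θ.ρ n) hy
        exact hc.trans h2
      have hrne : LinearMap.range f.hom.hom.hom ≠ ⊥ := by
        intro h0
        apply hne
        apply Action.Hom.ext
        rw [Action.zero_hom]
        apply FGModuleCat.hom_ext
        exact LinearMap.range_eq_bot.mp h0
      have hsurj : Function.Surjective f.hom.hom.hom := by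
        rcases subrep_bot_or_top θ (LinearMap.range f.hom.hom.hom) hrinv with h | h
        · exact absurd h hrne
        · rw [← LinearMap.range_eq_top]
          exact h
      -- build the inverse
      set e := LinearEquiv.ofBijective f.hom.hom.hom ⟨hinj, hsurj⟩ with he
      have heap : ∀ v : Y, e v = f.hom.hom.hom v := fun v => rfl
      have hecomm : ∀ g : G, e.symm.toLinearMap ∘ₗ χ.ρ g
          = Y.ρ g ∘ₗ e.symm.toLinearMap := by
        intro g
        apply LinearMap.ext
        intro v
        apply e.injective
        have hR : e ((Y.ρ g ∘ₗ e.symm.toLinearMap) v) = (χ.ρ g) v := by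
          have hc : f.hom.hom.hom ((Y.ρ g) (e.symm v)) = (χ.ρ g) (f.hom.hom.hom (e.symm v)) :=
            LinearMap.congr_fun (congrArg (fun t => t.hom.hom) (f.comm g)) (e.symm v)
          have h9 : e ((Y.ρ g ∘ₗ e.symm.toLinearMap) v) = f.hom.hom.hom ((Y.ρ g) (e.symm v)) := rfl
          rw [h9, hc]
          congr 1
          exact e.apply_symm_apply v
        have hL : e ((e.symm.toLinearMap ∘ₗ χ.ρ g) v) = (χ.ρ g) v := e.apply_symm_apply _
        exact hL.trans hR.symm
      refine ⟨⟨⟨FGModuleCat.ofHom e.symm.toLinearMap, fun g => FGModuleCat.hom_ext (hecomm g)⟩, ?_, ?_⟩⟩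
      · apply Action.Hom.ext
        rw [Action.comp_hom, Action.id_hom]
        apply FGModuleCat.hom_ext
        apply LinearMap.ext
        intro v
        exact e.symm_apply_apply v
      · apply Action.Hom.ext
        rw [Action.comp_hom, Action.id_hom]
        apply FGModuleCat.hom_ext
        apply LinearMap.ext
        intro v
        exact e.apply_symm_apply v
  · -- characters agree on N
    intro n
    show LinearMap.trace ℂ _ (χ.ρ ((n : G))) = LinearMap.trace ℂ _ (θ.ρ n)
    rw [hχρ, hres n]
end
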